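/- Let m ≥ 1, let c_1, ..., c_m be positive reals and ω_0, ω_1, ..., ω_m be positive reals, set A_j = c_j/ω_j, assume A_1 < ... < A_m, and let B_1 < ... < B_m be the zeros of F(λ) = 1 + Σ_{j=1}^m A_j ω_j/(ω_0(A_j − λ)) on ℝ \ {A_1, ..., A_m} (which satisfy A_j < B_j < A_{j+1} and A_m < B_m). Let M be the (m+1)×(m+1) real matrix with M_{00} = (Σ_{j=1}^m c_j)/ω_0, M_{0j} = −c_j/ω_0, M_{j0} = −c_j/ω_j, M_{jj} = c_j/ω_j for 1 ≤ j ≤ m, and all other entries zero. Then the characteristic polynomial of M equals X · Π_{j=1}^m (X − B_j); in particular M has the m+1 simple eigenvalues 0 < B_1 < ... < B_m. -/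

import Mathlib

open Polynomial Finset

/-- Evaluating the characteristic polynomial at a point gives a determinant. -/
lemma eval_charpoly_aux {n : ℕ} (M : Matrix (Fin n) (Fin n) ℝ) (x : ℝ) :
    M.charpoly.eval x = (x • (1 : Matrix (Fin n) (Fin n) ℝ) - M).det := by
  have h : M.charpoly.eval x
      = ((Polynomial.evalRingHom x).mapMatrix (Matrix.charmatrix M)).det := by
    rw [Matrix.charpoly, ← RingHom.map_det]
    rfl
  rw [h]
  congr 1
  ext i j
  by_cases hij : i = j
  · subst hij
    simp [Matrix.charmatrix_apply_eq, Matrix.one_apply]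
  · simp [Matrix.charmatrix_apply_ne _ _ _ hij, Matrix.one_apply, hij]

/-- If `x` is an eigenvalue (with eigenvector `v ≠ 0`), it is a root of charpoly. -/
lemma eig_root_aux {n : ℕ} (M : Matrix (Fin n) (Fin n) ℝ) (x : ℝ)
    (v : Fin n → ℝ) (hv : v ≠ 0) (hMv : M.mulVec v = x • v) :
    M.charpoly.eval x = 0 := by
  rw [eval_charpoly_aux]
  rw [← Matrix.exists_mulVec_eq_zero_iff]
  refine ⟨v, hv, ?_⟩
  rw [Matrix.sub_mulVec, Matrix.smul_mulVec, Matrix.one_mulVec, hMv, sub_self]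

theorem stmt_16 (m : ℕ) (hm : 1 ≤ m) (c ω : ℕ → ℝ)
    (hc : ∀ j, 1 ≤ j → j ≤ m → 0 < c j)
    (hω : ∀ j ≤ m, 0 < ω j)
    (A : ℕ → ℝ) (hA : ∀ j, A j = c j / ω j)
    (hAmono : ∀ i j, 1 ≤ i → i < j → j ≤ m → A i < A j)
    (B : ℕ → ℝ)
    (hBmono : ∀ i j, 1 ≤ i → i < j → j ≤ m → B i < B j)
    (hABlo : ∀ j, 1 ≤ j → j ≤ m → A j < B j)
    (hABhi : ∀ j, 1 ≤ j → j < m → B j < A (j + 1))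
    (hBnotA : ∀ k, 1 ≤ k → k ≤ m → ∀ j, 1 ≤ j → j ≤ m → B k ≠ A j)
    (hBzero : ∀ k, 1 ≤ k → k ≤ m →
      1 + ∑ j ∈ Finset.Icc 1 m, A j * ω j / (ω 0 * (A j - B k)) = 0)
    (M : Matrix (Fin (m + 1)) (Fin (m + 1)) ℝ)
    (hM : ∀ i j : Fin (m + 1), M i j =
      if i = 0 then
        (if j = 0 then (∑ k ∈ Finset.Icc 1 m, c k) / ω 0 else -c j.val / ω 0)
      else
        (if j = 0 then -c i.val / ω i.val
         else if i = j then c i.val / ω i.val else 0)) :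
    M.charpoly = Polynomial.X *
      ∏ j ∈ Finset.Icc 1 m, (Polynomial.X - Polynomial.C (B j)) ∧ 0 < B 1 := by
  have hω0 : 0 < ω 0 := hω 0 (Nat.zero_le m)
  have hApos : ∀ j, 1 ≤ j → j ≤ m → 0 < A j := by
    intro j h1 h2; rw [hA]; exact div_pos (hc j h1 h2) (hω j h2)
  have hBpos : ∀ j, 1 ≤ j → j ≤ m → 0 < B j := fun j h1 h2 =>
    lt_trans (hApos j h1 h2) (hABlo j h1 h2)
  have hB1 : 0 < B 1 := hBpos 1 le_rfl hm
  refine ⟨?_, hB1⟩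
  -- the entry formula as a function of natural indices
  set F : ℕ → ℕ → ℝ := fun a b =>
    if a = 0 then (if b = 0 then (∑ k ∈ Finset.Icc 1 m, c k) / ω 0 else -c b / ω 0)
    else (if b = 0 then -c a / ω a else if a = b then c a / ω a else 0) with hF
  have hMf : ∀ i j : Fin (m + 1), M i j = F i.val j.val := by
    intro i j
    rw [hM, hF]
    simp only [Fin.ext_iff, Fin.val_zero]
  have hsplit : Finset.range (m + 1) = insert 0 (Finset.Icc 1 m) := by
    ext a; simp only [Finset.mem_range, Finset.mem_insert, Finset.mem_Icc]; omega
  have hrowsum : ∀ (w : ℕ → ℝ) (v : Fin (m + 1) → ℝ), (∀ t, v t = w t.val) →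
      ∀ i : Fin (m + 1),
      M.mulVec v i = F i.val 0 * w 0 + ∑ j ∈ Finset.Icc 1 m, F i.val j * w j := by
    intro w v hvw i
    have hv : v = fun t : Fin (m + 1) => w t.val := funext hvw
    subst hv
    have h1 : (M.mulVec fun t : Fin (m + 1) => w t.val) i
        = ∑ j ∈ Finset.range (m + 1), F i.val j * w j := by
      simp only [Matrix.mulVec, dotProduct, hMf]
      exact Fin.sum_univ_eq_sum_range (fun j => F i.val j * w j) (m + 1)
    rw [h1, hsplit, Finset.sum_insert (by simp)]
  set S : ℝ := ∑ k ∈ Finset.Icc 1 m, c k with hS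
  -- eigenvalue 0
  have hroot0 : M.charpoly.eval 0 = 0 := by
    apply eig_root_aux M 0 (fun _ => 1)
    · intro h
      have := congrFun h 0
      simp at this
    · funext i
      rw [hrowsum (fun _ => 1) _ (fun t => rfl) i]
      simp only [Pi.smul_apply, smul_eq_mul, zero_mul]
      rcases Nat.eq_zero_or_pos i.val with h0 | h0
      · rw [h0]
        have hF00 : F 0 0 = S / ω 0 := by simp [hF]
        have hterm : ∀ j ∈ Finset.Icc 1 m, F 0 j * (1:ℝ) = -(c j / ω 0) := by
          intro j hj
          rcases Finset.mem_Icc.mp hj with ⟨hj1, hj2⟩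
          have hj0 : j ≠ 0 := by omega
          have hF0j : F 0 j = -c j / ω 0 := by simp [hF, hj0]
          rw [hF0j]; ring
        rw [Finset.sum_congr rfl hterm, Finset.sum_neg_distrib, ← Finset.sum_div, ← hS, hF00]
        ring
      · have hi0 : i.val ≠ 0 := by omega
        have him : i.val ≤ m := by omega
        have hFi0 : F i.val 0 = -c i.val / ω i.val := by simp [hF, hi0]
        have hterm : ∀ j ∈ Finset.Icc 1 m, F i.val j * (1:ℝ)
            = if i.val = j then c i.val / ω i.val else 0 := by
          intro j hj
          rcases Finset.mem_Icc.mp hj with ⟨hj1, hj2⟩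
          have hj0 : j ≠ 0 := by omega
          by_cases h : i.val = j <;> simp [hF, hi0, hj0, h]
        rw [Finset.sum_congr rfl hterm, Finset.sum_ite_eq,
          if_pos (Finset.mem_Icc.mpr ⟨by omega, him⟩), hFi0]
        ring
  -- eigenvalues B k
  have hrootB : ∀ k, 1 ≤ k → k ≤ m → M.charpoly.eval (B k) = 0 := by
    intro k hk1 hk2
    have hBA : ∀ j, 1 ≤ j → j ≤ m → A j - B k ≠ 0 := fun j h1 h2 =>
      sub_ne_zero.mpr (Ne.symm (hBnotA k hk1 hk2 j h1 h2))
    -- the key sum identity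
    have hsumc : ∑ j ∈ Finset.Icc 1 m, c j / (A j - B k) = -ω 0 := by
      have h0 := hBzero k hk1 hk2
      have hterm : ∀ j ∈ Finset.Icc 1 m,
          A j * ω j / (ω 0 * (A j - B k)) = c j / (A j - B k) / ω 0 := by
        intro j hj
        rcases Finset.mem_Icc.mp hj with ⟨hj1, hj2⟩
        have hωj : ω j ≠ 0 := (hω j hj2).ne'
        have hcj : A j * ω j = c j := by rw [hA]; field_simp
        rw [hcj, div_div]
        ring_nf
      rw [Finset.sum_congr rfl hterm, ← Finset.sum_div] at h0
      have hω0' := hω0.ne'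
      field_simp at h0
      linarith
    set w : ℕ → ℝ := fun t => if t = 0 then 1 else A t / (A t - B k) with hw
    have hw0 : w 0 = 1 := by simp [hw]
    apply eig_root_aux M (B k) (fun t : Fin (m+1) => w t.val)
    · intro h
      have := congrFun h 0
      simp [hw] at this
    · funext i
      rw [hrowsum w _ (fun t => rfl) i]
      simp only [Pi.smul_apply, smul_eq_mul]
      rcases Nat.eq_zero_or_pos i.val with h0 | h0
      · rw [h0, hw0]
        have hω0' : ω 0 ≠ 0 := hω0.ne'
        have hF00 : F 0 0 = S / ω 0 := by simp [hF]
        have hterm : ∀ j ∈ Finset.Icc 1 m, F 0 j * w j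
            = -(c j) / ω 0 + (-(B k) / ω 0) * (c j / (A j - B k)) := by
          intro j hj
          rcases Finset.mem_Icc.mp hj with ⟨hj1, hj2⟩
          have hne := hBA j hj1 hj2
          have hj0 : j ≠ 0 := by omega
          have hF0j : F 0 j = -c j / ω 0 := by simp [hF, hj0]
          have hwj : w j = A j / (A j - B k) := by simp [hw, hj0]
          rw [hF0j, hwj]
          field_simp
          ring
        rw [Finset.sum_congr rfl hterm, Finset.sum_add_distrib, ← Finset.mul_sum, hsumc,
          ← Finset.sum_div, Finset.sum_neg_distrib, ← hS, hF00]
        field_simp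
        ring
      · have hi0 : i.val ≠ 0 := by omega
        have hi1 : 1 ≤ i.val := h0
        have him : i.val ≤ m := by omega
        have hFi0 : F i.val 0 = -c i.val / ω i.val := by simp [hF, hi0]
        have hterm : ∀ j ∈ Finset.Icc 1 m, F i.val j * w j
            = if i.val = j then c i.val / ω i.val * w i.val else 0 := by
          intro j hj
          rcases Finset.mem_Icc.mp hj with ⟨hj1, hj2⟩
          have hj0 : j ≠ 0 := by omega
          by_cases h : i.val = j <;> simp [hF, hi0, hj0, h]
        rw [Finset.sum_congr rfl hterm, Finset.sum_ite_eq,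
          if_pos (Finset.mem_Icc.mpr ⟨hi1, him⟩), hFi0]
        have hwi : w i.val = A i.val / (A i.val - B k) := by simp [hw, hi0]
        have hωi : ω i.val ≠ 0 := (hω i.val him).ne'
        have hci : c i.val = A i.val * ω i.val := by rw [hA]; field_simp
        rw [hwi, hw0, hci]
        have hne := hBA i.val hi1 him
        field_simp
        ring
  -- now the polynomial identity
  set q : Polynomial ℝ :=
    Polynomial.X * ∏ j ∈ Finset.Icc 1 m, (Polynomial.X - Polynomial.C (B j)) with hq
  have hqm : q.Monic :=
    Polynomial.monic_X.mul (Polynomial.monic_prod_of_monic _ _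
      fun j _ => Polynomial.monic_X_sub_C _)
  have hcard : (Finset.Icc 1 m).card = m := by
    rw [Nat.card_Icc]; omega
  have hqdeg : q.natDegree = m + 1 := by
    rw [hq, Polynomial.natDegree_mul Polynomial.X_ne_zero
      (Polynomial.monic_prod_of_monic _ _ fun j _ => Polynomial.monic_X_sub_C _).ne_zero,
      Polynomial.natDegree_X, Polynomial.natDegree_prod _ _
        (fun j _ => Polynomial.X_sub_C_ne_zero _)]
    simp only [Polynomial.natDegree_X_sub_C]
    rw [Finset.sum_const, hcard, smul_eq_mul]
    omega
  have hpm : M.charpoly.Monic := M.charpoly_monic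
  have hpdeg : M.charpoly.natDegree = m + 1 := by
    simp [Matrix.charpoly_natDegree_eq_dim]
  -- the difference
  set d : Polynomial ℝ := M.charpoly - q with hd
  have hddeg : d.natDegree < m + 1 := by
    by_cases hd0 : d = 0
    · rw [hd0]; simp
    · have h1 : M.charpoly.degree = q.degree := by
        rw [Polynomial.degree_eq_natDegree hpm.ne_zero,
          Polynomial.degree_eq_natDegree hqm.ne_zero, hpdeg, hqdeg]
      have h2 : d.degree < M.charpoly.degree :=
        Polynomial.degree_sub_lt h1 hpm.ne_zero (by rw [hpm.leadingCoeff, hqm.leadingCoeff])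
      rw [Polynomial.degree_eq_natDegree hpm.ne_zero, hpdeg] at h2
      exact (Polynomial.natDegree_lt_iff_degree_lt hd0).mpr h2
  set s : Finset ℝ := insert 0 ((Finset.Icc 1 m).image B) with hs
  have hBinj : Set.InjOn B (Finset.Icc 1 m) := by
    intro a ha b hb hab
    simp only [Finset.coe_Icc, Set.mem_Icc] at ha hb
    rcases lt_trichotomy a b with h | h | h
    · exact absurd hab (hBmono a b ha.1 h hb.2).ne
    · exact h
    · exact absurd hab.symm (hBmono b a hb.1 h ha.2).ne
  have h0notin : (0:ℝ) ∉ (Finset.Icc 1 m).image B := by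
    intro h
    rcases Finset.mem_image.mp h with ⟨j, hj, hj0⟩
    rcases Finset.mem_Icc.mp hj with ⟨hj1, hj2⟩
    exact (hBpos j hj1 hj2).ne' hj0
  have hscard : s.card = m + 1 := by
    rw [hs, Finset.card_insert_of_notMem h0notin, Finset.card_image_of_injOn hBinj, hcard]
  have heval : ∀ x ∈ s, d.eval x = 0 := by
    intro x hx
    rw [hd, Polynomial.eval_sub]
    rcases Finset.mem_insert.mp hx with h | h
    · subst h
      rw [hroot0, hq]
      simp
    · rcases Finset.mem_image.mp h with ⟨j, hj, rfl⟩
      rcases Finset.mem_Icc.mp hj with ⟨hj1, hj2⟩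
      rw [hrootB j hj1 hj2, hq]
      rw [Polynomial.eval_mul, Polynomial.eval_prod]
      rw [Finset.prod_eq_zero hj (by simp)]
      ring
  have hdz : d = 0 := by
    apply Polynomial.eq_zero_of_natDegree_lt_card_of_eval_eq_zero' d s heval
    rw [hscard]; exact hddeg
  have hfin := sub_eq_zero.mp hdz
  rw [hq] at hfin
  exact hfin
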